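/- (Krull–Schmidt theorem for Lie algebras, non-abelian case.) Let L be a finite-dimensional Lie algebra over a field K with two direct sum decompositions L = g_1 ⊕ … ⊕ g_r = h_1 ⊕ … ⊕ h_s into Lie ideals, each directly indecomposable and each g_i non-abelian. Let π_i (resp. ρ_j) denote the projections along the two decompositions. Then r = s and there is a UNIQUE permutation σ of {1,…,r} such that whenever j = σ(i): both π_i|_{h_j} : h_j → g_i and ρ_j|_{g_i} : g_i → h_j are Lie algebra isomorphisms, [g_i, g_i] = [h_j, h_j], h_j ⊆ g_i ⊕ Z(⊕_{k ≠ i} g_k), and g_i ⊆ h_j ⊕ Z(⊕_{k ≠ j} h_k). -/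

import Mathlib

/-- A Lie algebra is directly indecomposable if it is nonzero and admits no decomposition
as a direct sum of two nonzero ideals. -/
def LieDirectlyIndecomposable (K M : Type*) [Field K] [LieRing M] [LieAlgebra K M] : Prop :=
  Nontrivial M ∧
    ∀ I J : LieIdeal K M, I ⊓ J = ⊥ → I ⊔ J = ⊤ → I = ⊥ ∨ J = ⊥

/-- The linear map `p` restricts to a Lie algebra isomorphism from the ideal `A` onto the
ideal `B`. -/
def IsLieIsoOn {K L : Type*} [Field K] [LieRing L] [LieAlgebra K L]
    (p : L →ₗ[K] L) (A B : LieIdeal K L) : Prop :=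
  (∀ x ∈ A, p x ∈ B) ∧
  (∀ x ∈ A, ∀ y ∈ A, p ⁅x, y⁆ = ⁅p x, p y⁆) ∧
  Set.InjOn p (A : Set L) ∧
  (∀ y ∈ B, ∃ x ∈ A, p x = y)

/-- The carrier of the center `Z(⊕_{k ≠ i} f k)` viewed inside `L`. -/
def centerOfComplSup {K L : Type*} [Field K] [LieRing L] [LieAlgebra K L]
    {ι : Type*} (f : ι → LieIdeal K L) (i : ι) : Set L :=
  {z | z ∈ (⨆ k, ⨆ _ : k ≠ i, f k : LieIdeal K L) ∧
    ∀ y ∈ (⨆ k, ⨆ _ : k ≠ i, f k : LieIdeal K L), ⁅z, y⁆ = 0}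


open Module

namespace KS6

set_option linter.unusedSectionVars false


variable {K L : Type*} [Field K] [LieRing L] [LieAlgebra K L]

lemma mem_of_lie_right (I : LieIdeal K L) {a : L} (ha : a ∈ I) (y : L) : ⁅a, y⁆ ∈ I := by
  rw [← lie_skew]
  exact neg_mem (I.lie_mem ha)

lemma brkt_eq_zero {I J : LieIdeal K L} (hIJ : I ⊓ J = ⊥) {a b : L} (ha : a ∈ I) (hb : b ∈ J) :
    ⁅a, b⁆ = 0 := by
  have h1 : ⁅a, b⁆ ∈ I ⊓ J :=
    (LieSubmodule.mem_inf _ _ _).mpr ⟨mem_of_lie_right I ha b, J.lie_mem hb⟩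
  rw [hIJ] at h1
  exact (LieSubmodule.mem_bot _).mp h1

section Proj

variable {ι : Type*} [Fintype ι]

lemma mem_compl_sup (f : ι → LieIdeal K L) {i k : ι} (hk : k ≠ i) {x : L} (hx : x ∈ f k) :
    x ∈ (⨆ k, ⨆ _ : k ≠ i, f k : LieIdeal K L) := by
  have hle : f k ≤ (⨆ k, ⨆ _ : k ≠ i, f k : LieIdeal K L) :=
    le_iSup_of_le k (le_iSup (fun _ : k ≠ i => f k) hk)
  exact hle hx

lemma proj_zero_compl (f : ι → LieIdeal K L) (p : ι → L →ₗ[K] L)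
    (hzero : ∀ i k, k ≠ i → ∀ x ∈ f k, p i x = 0) (i : ι) {x : L}
    (hx : x ∈ (⨆ k, ⨆ _ : k ≠ i, f k : LieIdeal K L)) : p i x = 0 := by
  have hx' : x ∈ ⨆ k : {k : ι // k ≠ i}, f k := by rwa [iSup_subtype'] at hx
  refine LieSubmodule.iSup_induction (motive := fun y => p i y = 0) _ hx'
    (fun k y hy => hzero i k k.2 y hy) (map_zero _) ?_
  intro y z hy hz
  rw [map_add, hy, hz, add_zero]

lemma sum_proj [DecidableEq ι] (f : ι → LieIdeal K L) (p : ι → L →ₗ[K] L)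
    (hsup : (⨆ i, f i) = ⊤)
    (hid : ∀ i, ∀ x ∈ f i, p i x = x)
    (hzero : ∀ i k, k ≠ i → ∀ x ∈ f k, p i x = 0) (x : L) :
    x = ∑ k, p k x := by
  have hx : x ∈ (⨆ i, f i) := by rw [hsup]; exact LieSubmodule.mem_top x
  refine LieSubmodule.iSup_induction (motive := fun y => y = ∑ k, p k y) _ hx ?_ (by simp) ?_
  · intro m y hy
    rw [Finset.sum_eq_single m (fun k _ hk => hzero k m (Ne.symm hk) y hy) (by simp)]
    exact (hid m y hy).symm
  · intro y z hy hz
    simp only [map_add, Finset.sum_add_distrib, ← hy, ← hz]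

lemma sub_proj_mem [DecidableEq ι] (f : ι → LieIdeal K L) (p : ι → L →ₗ[K] L)
    (hsup : (⨆ i, f i) = ⊤)
    (hmem : ∀ i x, p i x ∈ f i)
    (hid : ∀ i, ∀ x ∈ f i, p i x = x)
    (hzero : ∀ i k, k ≠ i → ∀ x ∈ f k, p i x = 0) (i : ι) (x : L) :
    x - p i x ∈ (⨆ k, ⨆ _ : k ≠ i, f k : LieIdeal K L) := by
  have hx := sum_proj f p hsup hid hzero x
  have h2 := Finset.sum_erase_add Finset.univ (fun k => p k x) (Finset.mem_univ i)
  have h3 : ∑ k ∈ Finset.univ.erase i, p k x = x - p i x :=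
    eq_sub_of_add_eq (h2.trans hx.symm)
  rw [← h3]
  exact sum_mem fun k hk =>
    mem_compl_sup f (Finset.mem_erase.mp hk).1 (hmem k x)

lemma proj_lie [DecidableEq ι] (f : ι → LieIdeal K L) (p : ι → L →ₗ[K] L)
    (hsup : (⨆ i, f i) = ⊤)
    (hmem : ∀ i x, p i x ∈ f i)
    (hid : ∀ i, ∀ x ∈ f i, p i x = x)
    (hzero : ∀ i k, k ≠ i → ∀ x ∈ f k, p i x = 0) (i : ι) (x y : L) :
    p i ⁅x, y⁆ = ⁅p i x, y⁆ := by
  have hsplit : ⁅x, y⁆ = ⁅p i x, y⁆ + ⁅x - p i x, y⁆ := by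
    rw [← add_lie]; congr 1; abel
  have h1 : p i ⁅p i x, y⁆ = ⁅p i x, y⁆ := hid i _ (mem_of_lie_right (f i) (hmem i x) y)
  have h2 : p i ⁅x - p i x, y⁆ = 0 :=
    proj_zero_compl f p hzero i
      (mem_of_lie_right _ (sub_proj_mem f p hsup hmem hid hzero i x) y)
  rw [hsplit, map_add, h1, h2, add_zero]

end Proj

/-- A normal endomorphism. -/
def IsNrm {K M : Type*} [Field K] [LieRing M] [LieAlgebra K M] (e : Module.End K M) : Prop :=
  ∀ x y : M, e ⁅x, y⁆ = ⁅e x, y⁆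

section Nrm

variable {M : Type*} [LieRing M] [LieAlgebra K M]

lemma IsNrm.right {e : Module.End K M} (he : IsNrm e) (x y : M) : e ⁅x, y⁆ = ⁅x, e y⁆ := by
  rw [← lie_skew x y, map_neg, he y x]
  exact lie_skew _ _

lemma IsNrm.mul {e f : Module.End K M} (he : IsNrm e) (hf : IsNrm f) : IsNrm (e * f) :=
  fun x y => by rw [Module.End.mul_apply, hf, he, Module.End.mul_apply]

lemma IsNrm.add {e f : Module.End K M} (he : IsNrm e) (hf : IsNrm f) : IsNrm (e + f) :=
  fun x y => by simp only [LinearMap.add_apply, he x y, hf x y, add_lie]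

lemma IsNrm.zero : IsNrm (0 : Module.End K M) := fun x y => by simp

lemma IsNrm.one : IsNrm (1 : Module.End K M) := fun x y => by simp

lemma IsNrm.pow {e : Module.End K M} (he : IsNrm e) (n : ℕ) : IsNrm (e ^ n) := by
  induction n with
  | zero => simpa using IsNrm.one
  | succ n ih => rw [pow_succ]; exact ih.mul he

lemma IsNrm.sum {α : Type*} [DecidableEq α] {t : Finset α} {E : α → Module.End K M} :
    (∀ j ∈ t, IsNrm (E j)) → IsNrm (∑ j ∈ t, E j) := by
  induction t using Finset.induction_on with
  | empty => intro _; simpa using IsNrm.zero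
  | insert _ _ ha ih =>
    intro h
    rw [Finset.sum_insert ha]
    exact (h _ (Finset.mem_insert_self _ _)).add
      (ih fun j hj => h j (Finset.mem_insert_of_mem hj))

end Nrm


set_option linter.unusedSectionVars false

variable {K L : Type*} [Field K] [LieRing L] [LieAlgebra K L]

lemma mul_pow_shift {G : Type*} [Monoid G] (a b : G) (n : ℕ) :
    (a * b) ^ (n + 1) = a * ((b * a) ^ n * b) := by
  induction n with
  | zero => simp
  | succ n ih =>
    rw [pow_succ, ih, pow_succ]
    simp only [mul_assoc]

/-- Restriction of a linear map to ideals. -/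
def resMap (I B : LieIdeal K L) (e : L →ₗ[K] L) (he : ∀ x ∈ I, e x ∈ B) : ↥I →ₗ[K] ↥B where
  toFun x := ⟨e x.1, he x.1 x.2⟩
  map_add' x y := Subtype.ext (by simp)
  map_smul' c x := Subtype.ext (by simp)

@[simp] lemma resMap_coe (I B : LieIdeal K L) (e : L →ₗ[K] L) (he : ∀ x ∈ I, e x ∈ B)
    (x : ↥I) : (resMap I B e he x : L) = e x := rfl

/-- Restriction of a linear map to an endomorphism of an ideal. -/
def resEnd (I : LieIdeal K L) (e : L →ₗ[K] L) (he : ∀ x ∈ I, e x ∈ I) : Module.End K ↥I :=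
  resMap I I e he

@[simp] lemma resEnd_coe (I : LieIdeal K L) (e : L →ₗ[K] L) (he : ∀ x ∈ I, e x ∈ I)
    (x : ↥I) : (resEnd I e he x : L) = e x := rfl

lemma resEnd_pow (I : LieIdeal K L) (e : L →ₗ[K] L) (he : ∀ x ∈ I, e x ∈ I) (n : ℕ) :
    ∀ x : ↥I, ((resEnd I e he ^ n) x : L) = ((e : Module.End K L) ^ n) (x : L) := by
  induction n with
  | zero => intro x; simp
  | succ n ih =>
    intro x
    rw [pow_succ, pow_succ, Module.End.mul_apply, Module.End.mul_apply,
      ih (resEnd I e he x), resEnd_coe]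

lemma resEnd_nrm (I : LieIdeal K L) (e : L →ₗ[K] L) (he : ∀ x ∈ I, e x ∈ I)
    (hn : ∀ x y : L, e ⁅x, y⁆ = ⁅e x, y⁆) : IsNrm (resEnd I e he) := by
  intro x y
  apply Subtype.ext
  simpa using hn (x : L) (y : L)

section Fitting

variable {M : Type*} [LieRing M] [LieAlgebra K M]

lemma fitting [FiniteDimensional K M] (hind : LieDirectlyIndecomposable K M)
    {e : Module.End K M} (he : IsNrm e) :
    Function.Bijective e ∨ e ^ (finrank K M) = 0 := by
  haveI : Nontrivial M := hind.1
  have hnpos : 0 < finrank K M := finrank_pos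
  set n := finrank K M with hn
  have hen : IsNrm (e ^ n) := he.pow n
  have lie_memker : ∀ {x m : M}, m ∈ LinearMap.ker (e ^ n) → ⁅x, m⁆ ∈ LinearMap.ker (e ^ n) := by
    intro x m hm
    rw [LinearMap.mem_ker] at hm ⊢
    rw [hen.right, hm, lie_zero]
  have lie_memrange : ∀ {x m : M}, m ∈ LinearMap.range (e ^ n) →
      ⁅x, m⁆ ∈ LinearMap.range (e ^ n) := by
    intro x m hm
    obtain ⟨y, rfl⟩ := hm
    exact ⟨⁅x, y⁆, hen.right x y⟩
  let I : LieIdeal K M := { LinearMap.ker (e ^ n) with lie_mem := fun hm => lie_memker hm }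
  let J : LieIdeal K M := { LinearMap.range (e ^ n) with lie_mem := fun hm => lie_memrange hm }
  have hIcoe : LieSubmodule.toSubmodule I = LinearMap.ker (e ^ n) := rfl
  have hJcoe : LieSubmodule.toSubmodule J = LinearMap.range (e ^ n) := rfl
  have hmemI : ∀ {m : M}, m ∈ I ↔ m ∈ LinearMap.ker (e ^ n) := Iff.rfl
  have hmemJ : ∀ {m : M}, m ∈ J ↔ m ∈ LinearMap.range (e ^ n) := Iff.rfl
  have hsub : LinearMap.ker (e ^ n) ⊓ LinearMap.range (e ^ n) = ⊥ := by
    rw [eq_bot_iff]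
    rintro m ⟨hk, y, rfl⟩
    have h2 : y ∈ LinearMap.ker (e ^ (n + n)) := by
      rw [LinearMap.mem_ker, pow_add, Module.End.mul_apply]
      exact hk
    rw [Module.End.ker_pow_eq_ker_pow_finrank_of_le (by omega), ← hn] at h2
    simpa using h2
  have hdisj : I ⊓ J = ⊥ := by
    rw [← LieSubmodule.toSubmodule_inj, LieSubmodule.inf_toSubmodule,
      LieSubmodule.bot_toSubmodule, hIcoe, hJcoe]
    exact hsub
  have hcodisj : I ⊔ J = ⊤ := by
    rw [← LieSubmodule.toSubmodule_inj, LieSubmodule.sup_toSubmodule,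
      LieSubmodule.top_toSubmodule, hIcoe, hJcoe]
    apply Submodule.eq_top_of_finrank_eq
    have h1 := LinearMap.finrank_range_add_finrank_ker (e ^ n)
    have h2 := Submodule.finrank_sup_add_finrank_inf_eq
      (LinearMap.ker (e ^ n)) (LinearMap.range (e ^ n))
    rw [hsub, finrank_bot] at h2
    omega
  rcases hind.2 I J hdisj hcodisj with hI | hJ
  · left
    have hkn : LinearMap.ker (e ^ n) = ⊥ := by
      rw [← hIcoe, hI, LieSubmodule.bot_toSubmodule]
    have hker : LinearMap.ker e = ⊥ := by
      rw [eq_bot_iff]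
      intro x hx
      rw [LinearMap.mem_ker] at hx
      have hxn : x ∈ LinearMap.ker (e ^ n) := by
        rw [LinearMap.mem_ker]
        obtain ⟨m, hm⟩ := Nat.exists_eq_succ_of_ne_zero hnpos.ne'
        rw [hm, pow_succ, Module.End.mul_apply, hx, map_zero]
      rw [hkn] at hxn
      exact hxn
    have hinj := LinearMap.ker_eq_bot.mp hker
    exact ⟨hinj, LinearMap.injective_iff_surjective.mp hinj⟩
  · right
    have : LinearMap.range (e ^ n) = ⊥ := by
      rw [← hJcoe, hJ, LieSubmodule.bot_toSubmodule]
    exact LinearMap.range_eq_bot.mp this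

lemma bij_of_add [FiniteDimensional K M] (hind : LieDirectlyIndecomposable K M)
    {e f : Module.End K M} (he : IsNrm e) (hf : IsNrm f)
    (hef : Function.Bijective (e + f)) :
    Function.Bijective e ∨ Function.Bijective f := by
  haveI : Nontrivial M := hind.1
  set q := LinearEquiv.ofBijective (e + f) hef with hq
  set u : Module.End K M := (q.symm : M →ₗ[K] M) with hu
  have hur : ∀ x, (e + f) (u x) = x := fun x => q.apply_symm_apply x
  have hul : ∀ x, u ((e + f) x) = x := fun x => q.symm_apply_apply x
  have hun : IsNrm u := by
    intro x y
    apply hef.1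
    rw [hur, (he.add hf) (u x) y, hur]
  have heu : IsNrm (e * u) := he.mul hun
  rcases fitting hind heu with hbij | hnil
  · left
    have hsurj : Function.Surjective e := by
      intro y
      obtain ⟨x, hx⟩ := hbij.2 y
      exact ⟨u x, by simpa [Module.End.mul_apply] using hx⟩
    exact ⟨LinearMap.injective_iff_surjective.mpr hsurj, hsurj⟩
  · right
    have hfu : f * u = 1 - e * u := by
      have h1 : (e + f) * u = 1 := by
        ext x; simpa [Module.End.mul_apply, Module.End.one_apply] using hur x
      rw [← h1, add_mul]; abel
    have hker : ∀ x, (f * u) x = 0 → x = 0 := by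
      intro x hx
      have h0 : (e * u) x = x := by
        rw [hfu] at hx
        have : x - (e * u) x = 0 := by
          simpa [LinearMap.sub_apply, Module.End.one_apply] using hx
        have := sub_eq_zero.mp this
        exact this.symm
      have hNx : ∀ k : ℕ, x = ((e * u) ^ k) x := by
        intro k
        induction k with
        | zero => simp
        | succ k ih =>
          calc x = ((e * u) ^ k) x := ih
            _ = ((e * u) ^ k) ((e * u) x) := by rw [h0]
            _ = ((e * u) ^ (k + 1)) x := by rw [pow_succ]; rfl
      have hfin := hNx (finrank K M)
      rw [hnil] at hfin
      simpa using hfin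
    have hinj : Function.Injective (f * u) := by
      intro a b hab
      have h1 : (f * u) (a - b) = 0 := by rw [map_sub, hab, sub_self]
      exact sub_eq_zero.mp (hker _ h1)
    have hsurj : Function.Surjective f := by
      intro y
      obtain ⟨x, hx⟩ := (LinearMap.injective_iff_surjective.mp hinj) y
      exact ⟨u x, by simpa [Module.End.mul_apply] using hx⟩
    exact ⟨LinearMap.injective_iff_surjective.mpr hsurj, hsurj⟩

end Fitting

lemma exists_bij_of_sum {M : Type*} [LieRing M] [LieAlgebra K M] [FiniteDimensional K M]
    (hind : LieDirectlyIndecomposable K M) {α : Type*} [DecidableEq α] (t : Finset α)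
    (E : α → Module.End K M) :
    (∀ j ∈ t, IsNrm (E j)) → Function.Bijective ⇑(∑ j ∈ t, E j) →
    ∃ j ∈ t, Function.Bijective (E j) := by
  haveI : Nontrivial M := hind.1
  induction t using Finset.induction_on with
  | empty =>
    intro _ hbij
    exfalso
    obtain ⟨x, y, hxy⟩ := exists_pair_ne M
    exact hxy (hbij.1 (by simp))
  | @insert a t' ha ih =>
    intro hE hbij
    rw [Finset.sum_insert ha] at hbij
    have hEt' : IsNrm (∑ j ∈ t', E j) :=
      IsNrm.sum fun j hj => hE j (Finset.mem_insert_of_mem hj)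
    rcases bij_of_add hind (hE a (Finset.mem_insert_self a t')) hEt' hbij with h1 | h2
    · exact ⟨a, Finset.mem_insert_self a t', h1⟩
    · obtain ⟨j, hj, hbj⟩ := ih (fun j hj => hE j (Finset.mem_insert_of_mem hj)) h2
      exact ⟨j, Finset.mem_insert_of_mem hj, hbj⟩

lemma finrank_decomp [FiniteDimensional K L] {ι : Type*} [Fintype ι] [DecidableEq ι]
    (f : ι → LieIdeal K L)
    (hsup : (⨆ i, f i) = ⊤)
    (hdisj : ∀ i, f i ⊓ (⨆ k, ⨆ _ : k ≠ i, f k) = ⊥) :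
    finrank K L = ∑ i, finrank K ↥(f i) := by
  have hint : DirectSum.IsInternal (fun i => (LieSubmodule.toSubmodule (f i))) := by
    rw [DirectSum.isInternal_submodule_iff_iSupIndep_and_iSup_eq_top]
    constructor
    · intro i
      rw [disjoint_iff]
      have h1 := congrArg LieSubmodule.toSubmodule (hdisj i)
      simp only [LieSubmodule.inf_toSubmodule, LieSubmodule.bot_toSubmodule,
        LieSubmodule.iSup_toSubmodule] at h1
      exact h1
    · rw [← LieSubmodule.iSup_toSubmodule, hsup, LieSubmodule.top_toSubmodule]
  have e1 := LinearEquiv.ofBijective (DirectSum.coeLinearMap _) hint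
  have h2 := e1.finrank_eq
  rw [Module.finrank_directSum] at h2
  exact h2.symm

/-- The matching property between factor `i` and factor `j`. -/
abbrev KSpt {K L : Type*} [Field K] [LieRing L] [LieAlgebra K L] {ι κ : Type*}
    (g : ι → LieIdeal K L) (h : κ → LieIdeal K L)
    (π : ι → (L →ₗ[K] L)) (ρ : κ → (L →ₗ[K] L)) (i : ι) (j : κ) : Prop :=
  IsLieIsoOn (π i) (h j) (g i) ∧
  IsLieIsoOn (ρ j) (g i) (h j) ∧
  ⁅g i, g i⁆ = ⁅h j, h j⁆ ∧
  (∀ x ∈ h j, ∃ a ∈ g i, ∃ z ∈ centerOfComplSup g i, x = a + z) ∧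
  (∀ x ∈ g i, ∃ a ∈ h j, ∃ z ∈ centerOfComplSup h j, x = a + z)

lemma key [FiniteDimensional K L] {ι κ : Type*} [Fintype ι] [Fintype κ]
    [DecidableEq ι] [DecidableEq κ]
    (g : ι → LieIdeal K L) (h : κ → LieIdeal K L)
    (hgsup : (⨆ i, g i) = ⊤)
    (hgdisj : ∀ i, g i ⊓ (⨆ k, ⨆ _ : k ≠ i, g k) = ⊥)
    (hhsup : (⨆ j, h j) = ⊤)
    (hhdisj : ∀ j, h j ⊓ (⨆ k, ⨆ _ : k ≠ j, h k) = ⊥)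
    (hgind : ∀ i, LieDirectlyIndecomposable K (g i))
    (hhind : ∀ j, LieDirectlyIndecomposable K (h j))
    (π : ι → (L →ₗ[K] L)) (ρ : κ → (L →ₗ[K] L))
    (hπmem : ∀ i x, π i x ∈ g i)
    (hπid : ∀ i, ∀ x ∈ g i, π i x = x)
    (hπzero : ∀ i k, k ≠ i → ∀ x ∈ g k, π i x = 0)
    (hρmem : ∀ j x, ρ j x ∈ h j)
    (hρid : ∀ j, ∀ x ∈ h j, ρ j x = x)
    (hρzero : ∀ j k, k ≠ j → ∀ x ∈ h k, ρ j x = 0)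
    (i : ι) : ∃ j : κ, KSpt g h π ρ i j := by
  have hπnrm : ∀ i', IsNrm (π i' : Module.End K L) := fun i' =>
    proj_lie g π hgsup hπmem hπid hπzero i'
  have hρnrm : ∀ j, IsNrm (ρ j : Module.End K L) := fun j =>
    proj_lie h ρ hhsup hρmem hρid hρzero j
  -- the endomorphisms π i ∘ ρ j of g i
  have hemem : ∀ j, ∀ x ∈ g i, (π i ∘ₗ ρ j) x ∈ g i := fun j x _ => hπmem i _
  set E : κ → Module.End K ↥(g i) := fun j => resEnd (g i) (π i ∘ₗ ρ j) (hemem j) with hE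
  have heN : ∀ j, IsNrm (E j) := by
    intro j
    apply resEnd_nrm
    intro x y
    rw [LinearMap.comp_apply, LinearMap.comp_apply, hρnrm j, hπnrm i]
  have hsumE : (∑ j, E j) = (1 : Module.End K ↥(g i)) := by
    ext x
    have h1 : (((∑ j, E j) x : ↥(g i)) : L) = ∑ j, π i (ρ j (x : L)) := by
      simp [LinearMap.sum_apply, hE]
    rw [h1, ← map_sum, ← sum_proj h ρ hhsup hρid hρzero (x : L), hπid i _ x.2]
    simp
  obtain ⟨j, -, hEbij⟩ : ∃ j ∈ Finset.univ, Function.Bijective (E j) := by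
    apply exists_bij_of_sum (hgind i) Finset.univ E (fun j _ => heN j)
    rw [hsumE]
    exact ⟨fun a b hab => by simpa using hab, fun y => ⟨y, by simp⟩⟩
  refine ⟨j, ?_⟩
  have hρinjg : ∀ x ∈ g i, ∀ y ∈ g i, ρ j x = ρ j y → x = y := by
    intro x hx y hy hxy
    have h1 : E j ⟨x, hx⟩ = E j ⟨y, hy⟩ := Subtype.ext (by simp [hE, hxy])
    simpa [Subtype.ext_iff] using hEbij.1 h1
  have hfmem : ∀ x ∈ h j, (ρ j ∘ₗ π i) x ∈ h j := fun x _ => hρmem j _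
  set F : Module.End K ↥(h j) := resEnd (h j) (ρ j ∘ₗ π i) hfmem with hF
  have hFN : IsNrm F := by
    apply resEnd_nrm
    intro x y
    rw [LinearMap.comp_apply, LinearMap.comp_apply, hπnrm i, hρnrm j]
  have hFbij : Function.Bijective F := by
    rcases fitting (hhind j) hFN with hb | h0
    · exact hb
    · exfalso
      set m := finrank K ↥(h j) with hm
      haveI : Nontrivial ↥(g i) := (hgind i).1
      obtain ⟨x0, hx0⟩ := exists_ne (0 : ↥(g i))
      have hpow : ∀ x : ↥(g i), (E j ^ (m + 1)) x = 0 := by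
        intro x
        apply Subtype.ext
        rw [resEnd_pow]
        have hcomp : ((π i ∘ₗ ρ j : L →ₗ[K] L) : Module.End K L)
            = (π i : Module.End K L) * (ρ j) := rfl
        rw [hcomp, mul_pow_shift, Module.End.mul_apply, Module.End.mul_apply]
        have hmem' : ρ j (x : L) ∈ h j := hρmem j _
        have h2 : (((ρ j : Module.End K L) * (π i)) ^ m) (ρ j (x : L)) = 0 := by
          have h3 := resEnd_pow (h j) (ρ j ∘ₗ π i) hfmem m ⟨ρ j (x : L), hmem'⟩
          rw [← hF, h0] at h3
          simp at h3
          exact h3.symm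
        rw [h2, map_zero]
        simp
      have hinj0 : ∀ x : ↥(g i), E j x = 0 → x = 0 := fun x hx =>
        hEbij.1 (by rw [hx, map_zero])
      have hk : ∀ k, ∀ x : ↥(g i), (E j ^ k) x = 0 → x = 0 := by
        intro k
        induction k with
        | zero => intro x hx; simpa using hx
        | succ k ih =>
          intro x hx
          rw [pow_succ, Module.End.mul_apply] at hx
          exact hinj0 x (ih _ hx)
      exact hx0 (hk (m + 1) x0 (hpow x0))
  have hπinjh : ∀ x ∈ h j, ∀ y ∈ h j, π i x = π i y → x = y := by
    intro x hx y hy hxy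
    have h1 : F ⟨x, hx⟩ = F ⟨y, hy⟩ := Subtype.ext (by simp [hF, hxy])
    simpa [Subtype.ext_iff] using hFbij.1 h1
  have hπsurj : ∀ y ∈ g i, ∃ u ∈ h j, π i u = y := by
    intro y hy
    obtain ⟨x, hx⟩ := hEbij.2 ⟨y, hy⟩
    refine ⟨ρ j (x : L), hρmem j _, ?_⟩
    have := congrArg (fun z : ↥(g i) => (z : L)) hx
    simpa [hE] using this
  have hρsurj : ∀ v ∈ h j, ∃ x ∈ g i, ρ j x = v := by
    intro v hv
    obtain ⟨z, hz⟩ := hFbij.2 ⟨v, hv⟩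
    refine ⟨π i (z : L), hπmem i _, ?_⟩
    have := congrArg (fun w : ↥(h j) => (w : L)) hz
    simpa [hF] using this
  have hπidem : ∀ x : L, π i (π i x) = π i x := fun x => hπid i _ (hπmem i x)
  have hρidem : ∀ x : L, ρ j (ρ j x) = ρ j x := fun x => hρid j _ (hρmem j x)
  have hπhom : ∀ x y : L, π i ⁅x, y⁆ = ⁅π i x, π i y⁆ := by
    intro x y
    rw [hπnrm i x y]
    have h1 : ⁅π i x, y⁆ = π i ⁅π i x, y⁆ :=
      (hπid i _ (mem_of_lie_right (g i) (hπmem i x) y)).symm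
    rw [h1, (hπnrm i).right (π i x) y]
  have hρhom : ∀ x y : L, ρ j ⁅x, y⁆ = ⁅ρ j x, ρ j y⁆ := by
    intro x y
    rw [hρnrm j x y]
    have h1 : ⁅ρ j x, y⁆ = ρ j ⁅ρ j x, y⁆ :=
      (hρid j _ (mem_of_lie_right (h j) (hρmem j x) y)).symm
    rw [h1, (hρnrm j).right (ρ j x) y]
  -- cross-vanishing
  have hgw : ∀ x ∈ g i, ∀ w ∈ (⨆ k, ⨆ _ : k ≠ j, h k : LieIdeal K L), ⁅x, w⁆ = 0 := by
    intro x hx w hw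
    have h1 : ρ j ⁅x, w⁆ = 0 := by
      rw [(hρnrm j).right x w, proj_zero_compl h ρ hρzero j hw, lie_zero]
    refine hρinjg _ (mem_of_lie_right (g i) hx w) _ (zero_mem _) ?_
    rw [h1, map_zero]
  have hhw : ∀ u ∈ h j, ∀ w ∈ (⨆ k, ⨆ _ : k ≠ i, g k : LieIdeal K L), ⁅u, w⁆ = 0 := by
    intro u hu w hw
    have h1 : π i ⁅u, w⁆ = 0 := by
      rw [(hπnrm i).right u w, proj_zero_compl g π hπzero i hw, lie_zero]
    refine hπinjh _ (mem_of_lie_right (h j) hu w) _ (zero_mem _) ?_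
    rw [h1, map_zero]
  have hbr_g : ∀ x ∈ g i, ∀ y ∈ g i, ⁅x, y⁆ = ⁅ρ j x, ρ j y⁆ := by
    intro x hx y hy
    have e1 : ⁅x, y⁆ = ⁅x, ρ j y⁆ := by
      have h1 : ⁅x, y - ρ j y⁆ = 0 :=
        hgw x hx _ (sub_proj_mem h ρ hhsup hρmem hρid hρzero j y)
      have h2 : ⁅x, y⁆ = ⁅x, ρ j y⁆ + ⁅x, y - ρ j y⁆ := by
        rw [← lie_add]; congr 1; abel
      rw [h2, h1, add_zero]
    have e2 : ⁅x, ρ j y⁆ = ⁅ρ j x, ρ j y⁆ := by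
      have h1 : ⁅x - ρ j x, ρ j y⁆ = 0 := by
        rw [← lie_skew]
        rw [brkt_eq_zero (hhdisj j) (hρmem j y)
          (sub_proj_mem h ρ hhsup hρmem hρid hρzero j x), neg_zero]
      have h2 : ⁅x, ρ j y⁆ = ⁅ρ j x, ρ j y⁆ + ⁅x - ρ j x, ρ j y⁆ := by
        rw [← add_lie]; congr 1; abel
      rw [h2, h1, add_zero]
    exact e1.trans e2
  have hbr_h : ∀ u ∈ h j, ∀ v ∈ h j, ⁅u, v⁆ = ⁅π i u, π i v⁆ := by
    intro u hu v hv
    have e1 : ⁅u, v⁆ = ⁅u, π i v⁆ := by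
      have h1 : ⁅u, v - π i v⁆ = 0 :=
        hhw u hu _ (sub_proj_mem g π hgsup hπmem hπid hπzero i v)
      have h2 : ⁅u, v⁆ = ⁅u, π i v⁆ + ⁅u, v - π i v⁆ := by
        rw [← lie_add]; congr 1; abel
      rw [h2, h1, add_zero]
    have e2 : ⁅u, π i v⁆ = ⁅π i u, π i v⁆ := by
      have h1 : ⁅u - π i u, π i v⁆ = 0 := by
        rw [← lie_skew]
        rw [brkt_eq_zero (hgdisj i) (hπmem i v)
          (sub_proj_mem g π hgsup hπmem hπid hπzero i u), neg_zero]
      have h2 : ⁅u, π i v⁆ = ⁅π i u, π i v⁆ + ⁅u - π i u, π i v⁆ := by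
        rw [← add_lie]; congr 1; abel
      rw [h2, h1, add_zero]
    exact e1.trans e2
  refine ⟨⟨fun x _ => hπmem i x, fun x _ y _ => hπhom x y,
      fun a ha b hb hab => hπinjh a ha b hb hab, fun y hy => hπsurj y hy⟩,
    ⟨fun x _ => hρmem j x, fun x _ y _ => hρhom x y,
      fun a ha b hb hab => hρinjg a ha b hb hab, fun v hv => hρsurj v hv⟩,
    ?_, ?_, ?_⟩
  · -- bracket ideal equality
    rw [LieSubmodule.lieIdeal_oper_eq_span, LieSubmodule.lieIdeal_oper_eq_span]
    congr 1
    ext w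
    constructor
    · rintro ⟨x, n, rfl⟩
      exact ⟨⟨ρ j (x : L), hρmem j _⟩, ⟨ρ j (n : L), hρmem j _⟩,
        (hbr_g (x : L) x.2 (n : L) n.2).symm⟩
    · rintro ⟨u, v, rfl⟩
      exact ⟨⟨π i (u : L), hπmem i _⟩, ⟨π i (v : L), hπmem i _⟩,
        (hbr_h (u : L) u.2 (v : L) v.2).symm⟩
  · -- h j ⊆ g i + Z
    intro x hx
    refine ⟨π i x, hπmem i x,
      x - π i x, ⟨sub_proj_mem g π hgsup hπmem hπid hπzero i x, ?_⟩, by abel⟩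
    intro y hy
    rw [sub_lie, hhw x hx y hy, brkt_eq_zero (hgdisj i) (hπmem i x) hy, sub_zero]
  · -- g i ⊆ h j + Z
    intro x hx
    refine ⟨ρ j x, hρmem j x,
      x - ρ j x, ⟨sub_proj_mem h ρ hhsup hρmem hρid hρzero j x, ?_⟩, by abel⟩
    intro y hy
    rw [sub_lie, hgw x hx y hy, brkt_eq_zero (hhdisj j) (hρmem j x) hy, sub_zero]

end KS6



/-- **Krull–Schmidt theorem for Lie algebras, non-abelian case.** Given two
direct sum decompositions `L = g₁ ⊕ ⋯ ⊕ g_r = h₁ ⊕ ⋯ ⊕ h_s` into directly indecomposable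
non-abelian Lie ideals, with projections `π i` and `ρ j`, one has `r = s` and there is a
unique permutation `σ` such that for `j = σ i`: both `π i : h j → g i` and `ρ j : g i → h j`
restrict to Lie algebra isomorphisms, `[g i, g i] = [h j, h j]`,
`h j ⊆ g i ⊕ Z(⊕_{k ≠ i} g k)` and `g i ⊆ h j ⊕ Z(⊕_{k ≠ j} h k)`. -/
theorem stmt6 {K L : Type*} [Field K] [LieRing L] [LieAlgebra K L]
    [FiniteDimensional K L] {r s : ℕ}
    (g : Fin r → LieIdeal K L) (h : Fin s → LieIdeal K L)
    (hgsup : (⨆ i, g i) = ⊤)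
    (hgdisj : ∀ i, g i ⊓ (⨆ k, ⨆ _ : k ≠ i, g k) = ⊥)
    (hhsup : (⨆ j, h j) = ⊤)
    (hhdisj : ∀ j, h j ⊓ (⨆ k, ⨆ _ : k ≠ j, h k) = ⊥)
    (hgind : ∀ i, LieDirectlyIndecomposable K (g i))
    (hhind : ∀ j, LieDirectlyIndecomposable K (h j))
    (hgnonab : ∀ i, ¬ IsLieAbelian (g i))
    (π : Fin r → (L →ₗ[K] L)) (ρ : Fin s → (L →ₗ[K] L))
    (hπmem : ∀ i x, π i x ∈ g i)
    (hπid : ∀ i, ∀ x ∈ g i, π i x = x)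
    (hπzero : ∀ i k, k ≠ i → ∀ x ∈ g k, π i x = 0)
    (hρmem : ∀ j x, ρ j x ∈ h j)
    (hρid : ∀ j, ∀ x ∈ h j, ρ j x = x)
    (hρzero : ∀ j k, k ≠ j → ∀ x ∈ h k, ρ j x = 0) :
    r = s ∧ ∃! σ : Fin r ≃ Fin s, ∀ i : Fin r,
      IsLieIsoOn (π i) (h (σ i)) (g i) ∧
      IsLieIsoOn (ρ (σ i)) (g i) (h (σ i)) ∧
      ⁅g i, g i⁆ = ⁅h (σ i), h (σ i)⁆ ∧
      (∀ x ∈ h (σ i), ∃ a ∈ g i, ∃ z ∈ centerOfComplSup g i, x = a + z) ∧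
      (∀ x ∈ g i, ∃ a ∈ h (σ i), ∃ z ∈ centerOfComplSup h (σ i), x = a + z) := by
  classical
  have key : ∀ i : Fin r, ∃ j : Fin s, KS6.KSpt g h π ρ i j := fun i =>
    KS6.key g h hgsup hgdisj hhsup hhdisj hgind hhind π ρ
      hπmem hπid hπzero hρmem hρid hρzero i
  choose σf hσf using key
  -- non-abelian factors have nonzero derived ideals
  have hgne : ∀ i, ⁅g i, g i⁆ ≠ ⊥ := by
    intro i hbot
    apply hgnonab i
    constructor
    intro x y
    have h1 := LieSubmodule.lie_mem_lie x.2 y.2 (N := (g i : LieSubmodule K L L)) (I := g i)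
    rw [hbot] at h1
    exact Subtype.ext ((LieSubmodule.mem_bot _).mp h1)
  have hne_of : ∀ (i : Fin r) (j j' : Fin s), j ≠ j' →
      ⁅g i, g i⁆ = ⁅h j, h j⁆ → ⁅g i, g i⁆ = ⁅h j', h j'⁆ → False := by
    intro i j j' hjj' h1 h2
    apply hgne i
    have l1 : ⁅g i, g i⁆ ≤ h j := by
      rw [h1]; exact (LieSubmodule.lie_le_inf _ _).trans inf_le_left
    have l2 : ⁅g i, g i⁆ ≤ h j' := by
      rw [h2]; exact (LieSubmodule.lie_le_inf _ _).trans inf_le_left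
    have l3 : h j' ≤ (⨆ k, ⨆ _ : k ≠ j, h k : LieIdeal K L) :=
      le_iSup_of_le j' (le_iSup (fun _ : j' ≠ j => h j') (Ne.symm hjj'))
    have l4 : ⁅g i, g i⁆ ≤ h j ⊓ (⨆ k, ⨆ _ : k ≠ j, h k : LieIdeal K L) :=
      le_inf l1 (l2.trans l3)
    rw [hhdisj j] at l4
    exact le_bot_iff.mp l4
  have hinjσ : Function.Injective σf := by
    intro i i' hii
    by_contra hne
    apply hgne i
    have h1 := (hσf i).2.2.1
    have h2 := (hσf i').2.2.1
    have l1 : ⁅g i, g i⁆ ≤ g i := (LieSubmodule.lie_le_inf _ _).trans inf_le_left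
    have l2 : ⁅g i, g i⁆ ≤ g i' := by
      rw [h1, hii, ← h2]; exact (LieSubmodule.lie_le_inf _ _).trans inf_le_left
    have l3 : g i' ≤ (⨆ k, ⨆ _ : k ≠ i, g k : LieIdeal K L) :=
      le_iSup_of_le i' (le_iSup (fun _ : i' ≠ i => g i') (fun a => hne a.symm))
    have l4 : ⁅g i, g i⁆ ≤ g i ⊓ (⨆ k, ⨆ _ : k ≠ i, g k : LieIdeal K L) :=
      le_inf l1 (l2.trans l3)
    rw [hgdisj i] at l4
    exact le_bot_iff.mp l4
  have hcard : ∀ i, Module.finrank K ↥(h (σf i)) = Module.finrank K ↥(g i) := by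
    intro i
    obtain ⟨hmap, hhom, hinj, hsur⟩ := (hσf i).1
    have hbij : Function.Bijective (KS6.resMap (h (σf i)) (g i) (π i) hmap) := by
      constructor
      · intro a b hab
        exact Subtype.ext (hinj a.2 b.2 (by simpa [Subtype.ext_iff] using hab))
      · intro y
        obtain ⟨x, hx, hxy⟩ := hsur (y : L) y.2
        exact ⟨⟨x, hx⟩, Subtype.ext (by simpa using hxy)⟩
    exact (LinearEquiv.ofBijective _ hbij).finrank_eq
  have htotg : Module.finrank K L = ∑ i, Module.finrank K ↥(g i) :=
    KS6.finrank_decomp g hgsup hgdisj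
  have htoth : Module.finrank K L = ∑ j, Module.finrank K ↥(h j) :=
    KS6.finrank_decomp h hhsup hhdisj
  have hsurjσ : Function.Surjective σf := by
    by_contra hns
    simp only [Function.Surjective, not_forall, not_exists] at hns
    obtain ⟨j0, hj0⟩ := hns
    have hsum1 : ∑ i : Fin r, Module.finrank K ↥(h (σf i))
        = ∑ j ∈ Finset.univ.image σf, Module.finrank K ↥(h j) := by
      rw [Finset.sum_image (fun a _ b _ hab => hinjσ hab)]
    have hlt : ∑ j ∈ Finset.univ.image σf, Module.finrank K ↥(h j)
        < ∑ j : Fin s, Module.finrank K ↥(h j) := by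
      refine Finset.sum_lt_sum_of_subset (Finset.subset_univ _) (Finset.mem_univ j0) ?_ ?_ ?_
      · simp only [Finset.mem_image, not_exists]
        intro a ha
        exact hj0 a ha.2
      · haveI : Nontrivial ↥(h j0) := (hhind j0).1
        exact Module.finrank_pos
      · intro _ _ _
        exact Nat.zero_le _
    have hcontra : Module.finrank K L < Module.finrank K L := by
      calc Module.finrank K L = ∑ i, Module.finrank K ↥(g i) := htotg
        _ = ∑ i, Module.finrank K ↥(h (σf i)) :=
            Finset.sum_congr rfl fun i _ => (hcard i).symm
        _ = ∑ j ∈ Finset.univ.image σf, Module.finrank K ↥(h j) := hsum1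
        _ < ∑ j : Fin s, Module.finrank K ↥(h j) := hlt
        _ = Module.finrank K L := htoth.symm
    exact lt_irrefl _ hcontra
  have hbijσ : Function.Bijective σf := ⟨hinjσ, hsurjσ⟩
  have hrs : r = s := by simpa using Fintype.card_of_bijective hbijσ
  refine ⟨hrs, Equiv.ofBijective σf hbijσ, fun i => hσf i, ?_⟩
  intro τ hτ
  apply Equiv.ext
  intro i
  by_contra hne
  exact hne_of i (τ i) (σf i) hne (hτ i).2.2.1 (hσf i).2.2.1
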